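/- arXiv:1501.03203 — 3 statements merged into one kernel-verified Lean document; each statement's English description precedes it below -/
import Mathlib

section
/- Discrete Hamilton principle (one degree of freedom): Let N ≥ 2, h > 0, and H : ℝ × ℝ → ℝ be differentiable. Define the discrete action L(Q,P) = ∑_{k=0}^{N−1} [ P(k)·(Q(k+1)−Q(k))/h − H(Q(k),P(k)) ]·h for Q,P : {0,...,N} → ℝ. Then (Q,P) is a critical point of L with respect to variations (U,V) vanishing at k=0 and k=N (i.e., the directional derivative of L at (Q,P) in every such direction (U,V) is zero) if and only if for all k with 1 ≤ k ≤ N−1: (Q(k+1)−Q(k))/h = ∂H/∂p (Q(k),P(k)) and (P(k)−P(k−1))/h = −∂H/∂q (Q(k),P(k)). -/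
open Finset

private lemma dhp_term_deriv (h : ℝ) (H : ℝ × ℝ → ℝ) (hH : Differentiable ℝ H)
    (Q P U V : ℕ → ℝ) (k : ℕ) :
    HasDerivAt (fun ε : ℝ =>
      ((P k + ε * V k) * ((Q (k + 1) + ε * U (k + 1)) - (Q k + ε * U k)) / h
        - H (Q k + ε * U k, P k + ε * V k)) * h)
      ((V k * (Q (k+1) - Q k) + P k * (U (k+1) - U k)) / h * h
        - fderiv ℝ H (Q k, P k) (U k, V k) * h) 0 := by
  have ha : HasDerivAt (fun ε : ℝ => P k + ε * V k) (V k) 0 := by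
    simpa using ((hasDerivAt_id (0:ℝ)).mul_const (V k)).const_add (P k)
  have hb : HasDerivAt (fun ε : ℝ => (Q (k+1) + ε * U (k+1)) - (Q k + ε * U k))
      (U (k+1) - U k) 0 := by
    have h1 : HasDerivAt (fun ε : ℝ => Q (k+1) + ε * U (k+1)) (U (k+1)) 0 := by
      simpa using ((hasDerivAt_id (0:ℝ)).mul_const (U (k+1))).const_add (Q (k+1))
    have h2 : HasDerivAt (fun ε : ℝ => Q k + ε * U k) (U k) 0 := by
      simpa using ((hasDerivAt_id (0:ℝ)).mul_const (U k)).const_add (Q k)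
    exact h1.sub h2
  have hc : HasDerivAt (fun ε : ℝ => (Q k + ε * U k, P k + ε * V k))
      ((U k, V k) : ℝ × ℝ) 0 := by
    have h2 : HasDerivAt (fun ε : ℝ => Q k + ε * U k) (U k) 0 := by
      simpa using ((hasDerivAt_id (0:ℝ)).mul_const (U k)).const_add (Q k)
    exact h2.prodMk ha
  have hHc : HasDerivAt (fun ε : ℝ => H (Q k + ε * U k, P k + ε * V k))
      (fderiv ℝ H (Q k, P k) (U k, V k)) 0 := by
    have h0 : ((Q k + 0 * U k, P k + 0 * V k) : ℝ × ℝ) = (Q k, P k) := by norm_num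
    have := HasFDerivAt.comp_hasDerivAt 0 (h0 ▸ (hH (Q k, P k)).hasFDerivAt) hc
    simpa [Function.comp_def] using this
  have := (((ha.mul hb).div_const h).sub hHc).mul_const h
  refine this.congr_deriv ?_
  ring

private lemma dhp_partials (H : ℝ × ℝ → ℝ) (hH : Differentiable ℝ H) (q p : ℝ) :
    deriv (fun x => H (q, x)) p = fderiv ℝ H (q, p) (0, 1) ∧
    deriv (fun x => H (x, p)) q = fderiv ℝ H (q, p) (1, 0) := by
  constructor
  · have hc : HasDerivAt (fun x : ℝ => ((q, x) : ℝ × ℝ)) ((0, 1) : ℝ × ℝ) p :=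
      (hasDerivAt_const p q).prodMk (hasDerivAt_id p)
    exact (HasFDerivAt.comp_hasDerivAt p (hH (q, p)).hasFDerivAt hc).deriv
  · have hc : HasDerivAt (fun x : ℝ => ((x, p) : ℝ × ℝ)) ((1, 0) : ℝ × ℝ) q :=
      (hasDerivAt_id q).prodMk (hasDerivAt_const q p)
    exact (HasFDerivAt.comp_hasDerivAt q (hH (q, p)).hasFDerivAt hc).deriv

private lemma dhp_fderiv_decomp (H : ℝ × ℝ → ℝ) (z : ℝ × ℝ) (u v : ℝ) :
    fderiv ℝ H z (u, v) = u * fderiv ℝ H z (1, 0) + v * fderiv ℝ H z (0, 1) := by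
  have huv : ((u, v) : ℝ × ℝ) = u • ((1:ℝ), (0:ℝ)) + v • ((0:ℝ), (1:ℝ)) := by
    simp [Prod.ext_iff]
  rw [huv, map_add, map_smul, map_smul, smul_eq_mul, smul_eq_mul]

/-- Discrete Hamilton principle (one degree of freedom): criticality of the
discrete action with respect to variations vanishing at the endpoints is
equivalent to the discrete Hamilton equations (forward difference in `Q`,
backward difference in `P`). -/
theorem discrete_hamilton_principle (N : ℕ) (hN : 2 ≤ N) (h : ℝ) (hh : 0 < h)
    (H : ℝ × ℝ → ℝ) (hH : Differentiable ℝ H) (Q P : ℕ → ℝ) :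
    (∀ U V : ℕ → ℝ, U 0 = 0 → U N = 0 → V 0 = 0 → V N = 0 →
      deriv (fun ε : ℝ => ∑ k ∈ Finset.range N,
        ((P k + ε * V k) * ((Q (k + 1) + ε * U (k + 1)) - (Q k + ε * U k)) / h
          - H (Q k + ε * U k, P k + ε * V k)) * h) 0 = 0)
    ↔ (∀ k, 1 ≤ k → k ≤ N - 1 →
        (Q (k + 1) - Q k) / h = deriv (fun p => H (Q k, p)) (P k) ∧
        (P k - P (k - 1)) / h = - deriv (fun q => H (q, P k)) (Q k)) := by
  have hne : h ≠ 0 := ne_of_gt hh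
  set Hq : ℕ → ℝ := fun k => fderiv ℝ H (Q k, P k) (1, 0) with hHqdef
  set Hp : ℕ → ℝ := fun k => fderiv ℝ H (Q k, P k) (0, 1) with hHpdef
  have hpq : ∀ k, deriv (fun p => H (Q k, p)) (P k) = Hp k ∧
      deriv (fun q => H (q, P k)) (Q k) = Hq k := fun k =>
    ⟨(dhp_partials H hH (Q k) (P k)).1, (dhp_partials H hH (Q k) (P k)).2⟩
  -- the derivative of the action
  have hder : ∀ U V : ℕ → ℝ,
      deriv (fun ε : ℝ => ∑ k ∈ Finset.range N,
        ((P k + ε * V k) * ((Q (k + 1) + ε * U (k + 1)) - (Q k + ε * U k)) / h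
          - H (Q k + ε * U k, P k + ε * V k)) * h) 0
      = ∑ k ∈ Finset.range N, (V k * (Q (k+1) - Q k) + P k * (U (k+1) - U k)
          - h * (U k * Hq k + V k * Hp k)) := by
    intro U V
    have hsum : HasDerivAt (fun ε : ℝ => ∑ k ∈ Finset.range N,
        ((P k + ε * V k) * ((Q (k + 1) + ε * U (k + 1)) - (Q k + ε * U k)) / h
          - H (Q k + ε * U k, P k + ε * V k)) * h)
        (∑ k ∈ Finset.range N,
          ((V k * (Q (k+1) - Q k) + P k * (U (k+1) - U k)) / h * h
            - fderiv ℝ H (Q k, P k) (U k, V k) * h)) 0 :=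
      HasDerivAt.fun_sum (fun k _ => dhp_term_deriv h H hH Q P U V k)
    rw [hsum.deriv]
    refine Finset.sum_congr rfl fun k _ => ?_
    rw [div_mul_cancel₀ _ hne, dhp_fderiv_decomp]
    ring
  constructor
  · intro hcrit k hk1 hkN
    have hkltN : k < N := by omega
    have hkmem : k ∈ Finset.range N := Finset.mem_range.mpr hkltN
    constructor
    · -- first Hamilton equation : variation in P
      set V : ℕ → ℝ := fun j => if j = k then 1 else 0 with hV
      have h0 := hcrit (fun _ => 0) V rfl rfl
        (by simp [hV]; omega) (by simp [hV]; omega)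
      rw [hder (fun _ => 0) V] at h0
      have hsingle : ∑ j ∈ Finset.range N, (V j * (Q (j+1) - Q j) + P j * (0 - 0)
          - h * (0 * Hq j + V j * Hp j))
          = (Q (k+1) - Q k) - h * Hp k := by
        rw [Finset.sum_eq_single_of_mem k hkmem]
        · simp [hV]
        · intro b _ hb; simp [hV, hb]
      rw [hsingle] at h0
      rw [(hpq k).1]
      field_simp
      linarith
    · -- second Hamilton equation : variation in Q
      set U : ℕ → ℝ := fun j => if j = k then 1 else 0 with hU
      have h0 := hcrit U (fun _ => 0)
        (by simp [hU]; omega) (by simp [hU]; omega) rfl rfl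
      rw [hder U (fun _ => 0)] at h0
      have hsplit : ∀ j, (0 : ℝ) * (Q (j+1) - Q j) + P j * (U (j+1) - U j)
          - h * (U j * Hq j + 0 * Hp j)
          = P j * U (j+1) - (P j * U j + h * (U j * Hq j)) := by intro j; ring
      rw [Finset.sum_congr rfl (fun j _ => hsplit j), Finset.sum_sub_distrib] at h0
      have hA : ∑ j ∈ Finset.range N, P j * U (j+1) = P (k-1) := by
        rw [Finset.sum_eq_single_of_mem (k-1) (Finset.mem_range.mpr (by omega))]
        · have : (k-1)+1 = k := by omega
          simp [hU, this]
        · intro b _ hb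
          have : b + 1 ≠ k := by omega
          simp [hU, this]
      have hB : ∑ j ∈ Finset.range N, (P j * U j + h * (U j * Hq j))
          = P k + h * Hq k := by
        rw [Finset.sum_eq_single_of_mem k hkmem]
        · simp [hU]
        · intro b _ hb; simp [hU, hb]
      rw [hA, hB] at h0
      rw [(hpq k).2]
      field_simp
      linarith
  · intro heq U V hU0 hUN hV0 hVN
    rw [hder]
    have hsplit : ∀ j, V j * (Q (j+1) - Q j) + P j * (U (j+1) - U j)
        - h * (U j * Hq j + V j * Hp j)
        = V j * ((Q (j+1) - Q j) - h * Hp j)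
          + (P j * U (j+1) - (P j * U j + h * (U j * Hq j))) := by intro j; ring
    rw [Finset.sum_congr rfl (fun j _ => hsplit j), Finset.sum_add_distrib,
      Finset.sum_sub_distrib]
    have h1 : ∑ j ∈ Finset.range N, V j * ((Q (j+1) - Q j) - h * Hp j) = 0 := by
      refine Finset.sum_eq_zero fun j hj => ?_
      rcases Nat.eq_zero_or_pos j with hj0 | hj0
      · simp [hj0, hV0]
      · have := ((heq j hj0 (by have := Finset.mem_range.mp hj; omega)).1)
        rw [(hpq j).1] at this
        have : Q (j+1) - Q j = h * Hp j := by field_simp at this; linarith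
        rw [this]; ring
    have hshift : ∑ j ∈ Finset.range N, P j * U (j+1)
        = ∑ j ∈ Finset.range N, P (j-1) * U j := by
      have := Finset.sum_range_succ' (fun j => P (j-1) * U j) N
      simp only [Nat.add_sub_cancel] at this
      rw [Finset.sum_range_succ] at this
      simp [hU0, hUN] at this
      rw [this]
    rw [h1, hshift, ← Finset.sum_sub_distrib]
    have h2 : ∑ j ∈ Finset.range N, (P (j-1) * U j - (P j * U j + h * (U j * Hq j)))
        = 0 := by
      refine Finset.sum_eq_zero fun j hj => ?_
      rcases Nat.eq_zero_or_pos j with hj0 | hj0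
      · simp [hj0, hU0]
      · have := ((heq j hj0 (by have := Finset.mem_range.mp hj; omega)).2)
        rw [(hpq j).2] at this
        have : P j - P (j-1) = -(h * Hq j) := by field_simp at this; linarith
        have hpj : P (j-1) = P j + h * Hq j := by linarith
        rw [hpj]; ring
    rw [h2]; ring
end

section
/- Key identity in the Helmholtz reconstruction: Let X_q, X_p : ℝ^d × ℝ^d → ℝ^d be C¹ and satisfy the symmetry conditions (i) D_q X_q + (D_p X_p)ᵀ = 0, (ii) D_p X_q symmetric, (iii) D_q X_p symmetric. Then for all (q,p) and all (u,v) ∈ ℝ^d × ℝ^d, the directional derivative of H(q,p) = ∫_0^1 [⟨p, X_q(λq,λp)⟩ − ⟨q, X_p(λq,λp)⟩] dλ along (u,v) equals ⟨v, X_q(q,p)⟩ − ⟨u, X_p(q,p)⟩, because the integrand's derivative equals d/dλ [ λ⟨v, X_q(λq,λp)⟩ − λ⟨u, X_p(λq,λp)⟩ ]. -/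
open scoped RealInnerProductSpace

section Aux

variable {d : ℕ}

local notation "E" => EuclideanSpace ℝ (Fin d)

/-- Partial derivative in the first variable as the full derivative composed with `inl`. -/
lemma helmholtz_aux_fst {f : E × E → E} (hf : Differentiable ℝ f) (a b u : E) :
    fderiv ℝ (fun x => f (x, b)) a u = fderiv ℝ f (a, b) (u, 0) := by
  have h : HasFDerivAt (fun x : E => f (x, b))
      ((fderiv ℝ f (a, b)).comp (ContinuousLinearMap.inl ℝ E E)) a :=
    (hf (a, b)).hasFDerivAt.comp a ((hasFDerivAt_id a).prodMk (hasFDerivAt_const b a))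
  rw [h.fderiv]; rfl

/-- Partial derivative in the second variable. -/
lemma helmholtz_aux_snd {f : E × E → E} (hf : Differentiable ℝ f) (a b u : E) :
    fderiv ℝ (fun y => f (a, y)) b u = fderiv ℝ f (a, b) (0, u) := by
  have h : HasFDerivAt (fun y : E => f (a, y))
      ((fderiv ℝ f (a, b)).comp (ContinuousLinearMap.inr ℝ E E)) b :=
    (hf (a, b)).hasFDerivAt.comp b ((hasFDerivAt_const a b).prodMk (hasFDerivAt_id b))
  rw [h.fderiv]; rfl

end Aux

/-- Key identity in the Helmholtz reconstruction: the directional derivative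
of `H` along `(u,v)` equals `⟪v, X_q(q,p)⟫ - ⟪u, X_p(q,p)⟫`. -/
theorem helmholtz_directional_derivative (d : ℕ)
    (Xq Xp : EuclideanSpace ℝ (Fin d) × EuclideanSpace ℝ (Fin d) → EuclideanSpace ℝ (Fin d))
    (hXq : ContDiff ℝ 1 Xq) (hXp : ContDiff ℝ 1 Xp)
    (h1 : ∀ q p u v, ⟪fderiv ℝ (fun q' => Xq (q', p)) q u, v⟫
        + ⟪u, fderiv ℝ (fun p' => Xp (q, p')) p v⟫ = 0)
    (h2 : ∀ q p u v, ⟪fderiv ℝ (fun p' => Xq (q, p')) p u, v⟫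
        = ⟪fderiv ℝ (fun p' => Xq (q, p')) p v, u⟫)
    (h3 : ∀ q p u v, ⟪fderiv ℝ (fun q' => Xp (q', p)) q u, v⟫
        = ⟪fderiv ℝ (fun q' => Xp (q', p)) q v, u⟫)
    (H : EuclideanSpace ℝ (Fin d) × EuclideanSpace ℝ (Fin d) → ℝ)
    (hH : ∀ q p, H (q, p) =
      ∫ l in (0:ℝ)..1, (⟪p, Xq (l • q, l • p)⟫ - ⟪q, Xp (l • q, l • p)⟫)) :
    ∀ q p u v, HasDerivAt (fun t : ℝ => H (q + t • u, p + t • v))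
      (⟪v, Xq (q, p)⟫ - ⟪u, Xp (q, p)⟫) 0 := by
  intro q p u v
  have hdXq : Differentiable ℝ Xq := hXq.differentiable one_ne_zero
  have hdXp : Differentiable ℝ Xp := hXp.differentiable one_ne_zero
  -- the key pointwise algebraic identity coming from the symmetry conditions
  have key : ∀ a b q' p' u' v' : EuclideanSpace ℝ (Fin d),
      ⟪p', fderiv ℝ Xq (a, b) (u', v')⟫ - ⟪q', fderiv ℝ Xp (a, b) (u', v')⟫
      = ⟪v', fderiv ℝ Xq (a, b) (q', p')⟫ - ⟪u', fderiv ℝ Xp (a, b) (q', p')⟫ := by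
    intro a b q' p' u' v'
    have eq : ∀ (x y : EuclideanSpace ℝ (Fin d)), ((x, y) : _ × _) = (x, 0) + (0, y) := by
      intro x y; simp
    have dq : ∀ (g : _ → EuclideanSpace ℝ (Fin d)) (hg : Differentiable ℝ g)
        (x y : EuclideanSpace ℝ (Fin d)),
        fderiv ℝ g (a, b) (x, y)
          = fderiv ℝ (fun z => g (z, b)) a x + fderiv ℝ (fun z => g (a, z)) b y := by
      intro g hg x y
      rw [helmholtz_aux_fst hg, helmholtz_aux_snd hg, eq x y, map_add]
    rw [dq Xq hdXq u' v', dq Xq hdXq q' p', dq Xp hdXp u' v', dq Xp hdXp q' p']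
    have e1 := h1 a b u' p'
    have e2 := h1 a b q' v'
    have e3 := h2 a b v' p'
    have e4 := h3 a b u' q'
    simp only [inner_add_right]
    linarith [e1, e2, e3, e4,
      real_inner_comm p' (fderiv ℝ (fun z => Xq (z, b)) a u'),
      real_inner_comm p' (fderiv ℝ (fun z => Xq (a, z)) b v'),
      real_inner_comm q' (fderiv ℝ (fun z => Xp (z, b)) a u'),
      real_inner_comm q' (fderiv ℝ (fun z => Xp (a, z)) b v'),
      real_inner_comm v' (fderiv ℝ (fun z => Xq (z, b)) a q'),
      real_inner_comm v' (fderiv ℝ (fun z => Xq (a, z)) b p'),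
      real_inner_comm u' (fderiv ℝ (fun z => Xp (z, b)) a q'),
      real_inner_comm u' (fderiv ℝ (fun z => Xp (a, z)) b p')]
  -- the parametric integrand and its t-derivative
  set Λ : ℝ → ℝ → EuclideanSpace ℝ (Fin d) × EuclideanSpace ℝ (Fin d) :=
    fun t l => (l • (q + t • u), l • (p + t • v)) with hΛdef
  set F : ℝ → ℝ → ℝ := fun t l => ⟪p + t • v, Xq (Λ t l)⟫ - ⟪q + t • u, Xp (Λ t l)⟫ with hFdef
  set F' : ℝ → ℝ → ℝ := fun t l =>
    (⟪p + t • v, fderiv ℝ Xq (Λ t l) (l • u, l • v)⟫ + ⟪v, Xq (Λ t l)⟫)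
    - (⟪q + t • u, fderiv ℝ Xp (Λ t l) (l • u, l • v)⟫ + ⟪u, Xp (Λ t l)⟫) with hF'def
  have hΛc : Continuous (fun x : ℝ × ℝ => Λ x.1 x.2) := by
    apply Continuous.prodMk <;> fun_prop
  have hΛd : ∀ t l : ℝ, HasDerivAt (fun s => Λ s l) (l • u, l • v) t := by
    intro t l
    apply HasDerivAt.prodMk
    · simpa [Pi.smul_def] using (((hasDerivAt_id t).smul_const u).const_add q).const_smul l
    · simpa [Pi.smul_def] using (((hasDerivAt_id t).smul_const v).const_add p).const_smul l
  have hdiff : ∀ t l : ℝ, HasDerivAt (fun s => F s l) (F' t l) t := by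
    intro t l
    apply HasDerivAt.sub
    · exact HasDerivAt.inner ℝ
        (by simpa using ((hasDerivAt_id t).smul_const v).const_add p)
        ((hdXq (Λ t l)).hasFDerivAt.comp_hasDerivAt t (hΛd t l))
    · exact HasDerivAt.inner ℝ
        (by simpa using ((hasDerivAt_id t).smul_const u).const_add q)
        ((hdXp (Λ t l)).hasFDerivAt.comp_hasDerivAt t (hΛd t l))
  -- continuity of F as a function of both variables
  have hFc : Continuous (fun x : ℝ × ℝ => F x.1 x.2) := by
    apply Continuous.sub
    · exact Continuous.inner (by fun_prop) (hdXq.continuous.comp hΛc)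
    · exact Continuous.inner (by fun_prop) (hdXp.continuous.comp hΛc)
  -- continuity of F' as a function of both variables
  have hF'c : Continuous (fun x : ℝ × ℝ => F' x.1 x.2) := by
    have c1 : Continuous (fun x : ℝ × ℝ => fderiv ℝ Xq (Λ x.1 x.2)) :=
      (hXq.continuous_fderiv one_ne_zero).comp hΛc
    have c2 : Continuous (fun x : ℝ × ℝ => fderiv ℝ Xp (Λ x.1 x.2)) :=
      (hXp.continuous_fderiv one_ne_zero).comp hΛc
    have c3 : Continuous (fun x : ℝ × ℝ =>
        ((x.2 • u, x.2 • v) : EuclideanSpace ℝ (Fin d) × EuclideanSpace ℝ (Fin d))) := by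
      apply Continuous.prodMk <;> fun_prop
    apply Continuous.sub <;> apply Continuous.add
    · exact Continuous.inner (by fun_prop) (c1.clm_apply c3)
    · exact Continuous.inner continuous_const (hdXq.continuous.comp hΛc)
    · exact Continuous.inner (by fun_prop) (c2.clm_apply c3)
    · exact Continuous.inner continuous_const (hdXp.continuous.comp hΛc)
  -- a uniform bound on F' on [-1,1] × [0,1]
  obtain ⟨C, hC⟩ := (((isCompact_closedBall (0:ℝ) 1).prod isCompact_Icc)).exists_bound_of_continuousOn
    (hF'c.continuousOn (s := Metric.closedBall (0:ℝ) 1 ×ˢ Set.Icc (0:ℝ) 1))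
  -- differentiation under the integral sign
  have main := intervalIntegral.hasDerivAt_integral_of_dominated_loc_of_deriv_le
    (F := F) (F' := F') (x₀ := (0:ℝ)) (a := (0:ℝ)) (b := 1) (s := Metric.ball (0:ℝ) 1)
    (bound := fun _ => C) (μ := MeasureTheory.volume) (Metric.ball_mem_nhds (0:ℝ) one_pos)
    (Filter.Eventually.of_forall fun t =>
      ((hFc.comp (Continuous.prodMk_right t)).aestronglyMeasurable))
    ((hFc.comp (Continuous.prodMk_right 0)).intervalIntegrable 0 1)
    (((hF'c.comp (Continuous.prodMk_right 0)).aestronglyMeasurable))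
    (MeasureTheory.ae_of_all _ fun l hl t ht => by
      apply hC (t, l)
      constructor
      · exact Metric.ball_subset_closedBall ht
      · have : Set.uIoc (0:ℝ) 1 = Set.Ioc 0 1 := Set.uIoc_of_le zero_le_one
        rw [this] at hl
        exact Set.Ioc_subset_Icc_self hl)
    (by exact intervalIntegrable_const)
    (MeasureTheory.ae_of_all _ fun l _ t _ => hdiff t l)
  obtain ⟨-, hmain⟩ := main
  -- identify the two sides
  have hg : ∀ l : ℝ, HasDerivAt
      (fun l : ℝ => l * ⟪v, Xq (l • q, l • p)⟫ - l * ⟪u, Xp (l • q, l • p)⟫) (F' 0 l) l := by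
    intro l
    have hΛ0 : ∀ l : ℝ, Λ 0 l = (l • q, l • p) := by
      intro l; simp [hΛdef]
    have hcurve : HasDerivAt (fun l : ℝ => ((l • q, l • p) :
        EuclideanSpace ℝ (Fin d) × EuclideanSpace ℝ (Fin d))) (q, p) l := by
      apply HasDerivAt.prodMk
      · simpa using (hasDerivAt_id l).smul_const q
      · simpa using (hasDerivAt_id l).smul_const p
    have d1 : HasDerivAt (fun l : ℝ => ⟪v, Xq (l • q, l • p)⟫)
        (⟪v, fderiv ℝ Xq (l • q, l • p) (q, p)⟫) l := by
      simpa using HasDerivAt.inner ℝ (hasDerivAt_const l v)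
        ((hdXq (l • q, l • p)).hasFDerivAt.comp_hasDerivAt l hcurve)
    have d2 : HasDerivAt (fun l : ℝ => ⟪u, Xp (l • q, l • p)⟫)
        (⟪u, fderiv ℝ Xp (l • q, l • p) (q, p)⟫) l := by
      simpa using HasDerivAt.inner ℝ (hasDerivAt_const l u)
        ((hdXp (l • q, l • p)).hasFDerivAt.comp_hasDerivAt l hcurve)
    have := ((hasDerivAt_id l).mul d1).sub ((hasDerivAt_id l).mul d2)
    refine this.congr_deriv ?_
    have hk := key (l • q) (l • p) q p (l • u) (l • v)
    simp only [hF'def, hΛ0, zero_smul, add_zero]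
    rw [real_inner_smul_left v _ l, real_inner_smul_left u _ l] at hk
    simp only [id_eq, one_mul]
    linarith
  have hint : ∫ l in (0:ℝ)..1, F' 0 l
      = ⟪v, Xq (q, p)⟫ - ⟪u, Xp (q, p)⟫ := by
    rw [intervalIntegral.integral_eq_sub_of_hasDerivAt (fun l _ => hg l)
      (((hF'c.comp (Continuous.prodMk_right 0)).intervalIntegrable 0 1))]
    simp
  have heq : (fun t : ℝ => H (q + t • u, p + t • v)) = fun t => ∫ l in (0:ℝ)..1, F t l := by
    funext t
    rw [hH]
  rw [heq, ← hint]
  exact hmain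
end

section
/- Discrete Hamiltonian Helmholtz theorem (scalar sufficiency): Let N ≥ 2 and X_Q, X_P : ℝ × ℝ → ℝ be C¹ with ∂X_Q/∂q(q,p) + ∂X_P/∂p(q,p) = 0 for all (q,p). Define H(q,p) = ∫_0^1 [ p·X_Q(λq,λp) − q·X_P(λq,λp) ] dλ. Then ∂H/∂p = X_Q and ∂H/∂q = −X_P, and consequently every solution (Q,P) of the discrete system ΔQ(k) = X_Q(Q(k),P(k)), ∇P(k) = X_P(Q(k),P(k)) (1 ≤ k ≤ N−1) is a critical point of the discrete functional L(Q,P) = ∑_{k=0}^{N−1}[P(k)(Q(k+1)−Q(k)) − H(Q(k),P(k))] with respect to variations vanishing at the endpoints, and conversely. -/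
open intervalIntegral MeasureTheory Metric ContinuousLinearMap Set

noncomputable def helmDF (XQ XP : ℝ × ℝ → ℝ) (x : ℝ × ℝ) (l : ℝ) : (ℝ × ℝ) →L[ℝ] ℝ :=
  (x.2 • ((fderiv ℝ XQ (l • x)).comp (l • ContinuousLinearMap.id ℝ (ℝ × ℝ)))
      + XQ (l • x) • ContinuousLinearMap.snd ℝ ℝ ℝ)
  - (x.1 • ((fderiv ℝ XP (l • x)).comp (l • ContinuousLinearMap.id ℝ (ℝ × ℝ)))
      + XP (l • x) • ContinuousLinearMap.fst ℝ ℝ ℝ)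

lemma clm_eval (T : (ℝ × ℝ) →L[ℝ] ℝ) (v : ℝ × ℝ) :
    T v = v.1 * T (1, 0) + v.2 * T (0, 1) := by
  have h : T v = T (v.1 • ((1:ℝ), (0:ℝ)) + v.2 • ((0:ℝ), (1:ℝ))) := by
    congr 1; ext <;> simp
  rw [h, map_add, T.map_smul, T.map_smul, smul_eq_mul, smul_eq_mul]

lemma helm_integrand_fderiv (XQ XP : ℝ × ℝ → ℝ) (hXQ : ContDiff ℝ 1 XQ)
    (hXP : ContDiff ℝ 1 XP) (l : ℝ) (y : ℝ × ℝ) :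
    HasFDerivAt (fun y : ℝ × ℝ => y.2 * XQ (l • y) - y.1 * XP (l • y))
      (helmDF XQ XP y l) y := by
  have hsc : HasFDerivAt (fun y : ℝ × ℝ => l • y)
      (l • ContinuousLinearMap.id ℝ (ℝ × ℝ)) y := (hasFDerivAt_id y).const_smul l
  have hQ : HasFDerivAt (fun y : ℝ × ℝ => XQ (l • y))
      ((fderiv ℝ XQ (l • y)).comp (l • ContinuousLinearMap.id ℝ (ℝ × ℝ))) y :=
    HasFDerivAt.comp y ((hXQ.differentiable one_ne_zero (l • y)).hasFDerivAt) hsc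
  have hP : HasFDerivAt (fun y : ℝ × ℝ => XP (l • y))
      ((fderiv ℝ XP (l • y)).comp (l • ContinuousLinearMap.id ℝ (ℝ × ℝ))) y :=
    HasFDerivAt.comp y ((hXP.differentiable one_ne_zero (l • y)).hasFDerivAt) hsc
  exact ((hasFDerivAt_snd.mul hQ).sub (hasFDerivAt_fst.mul hP))

lemma helmDF_cont (XQ XP : ℝ × ℝ → ℝ) (hXQ : ContDiff ℝ 1 XQ) (hXP : ContDiff ℝ 1 XP) :
    Continuous fun z : (ℝ × ℝ) × ℝ => helmDF XQ XP z.1 z.2 := by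
  have hsm : Continuous fun z : (ℝ × ℝ) × ℝ => z.2 • z.1 := continuous_snd.smul continuous_fst
  have hid : Continuous fun z : (ℝ × ℝ) × ℝ => z.2 • ContinuousLinearMap.id ℝ (ℝ × ℝ) :=
    continuous_snd.smul continuous_const
  unfold helmDF
  exact (((continuous_fst.snd).smul
      (((hXQ.continuous_fderiv one_ne_zero).comp hsm).clm_comp hid)).add
      ((hXQ.continuous.comp hsm).smul continuous_const)).sub
    (((continuous_fst.fst).smul
      (((hXP.continuous_fderiv one_ne_zero).comp hsm).clm_comp hid)).add
      ((hXP.continuous.comp hsm).smul continuous_const))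

lemma helm_main (XQ XP : ℝ × ℝ → ℝ) (hXQ : ContDiff ℝ 1 XQ) (hXP : ContDiff ℝ 1 XP)
    (hdiv' : ∀ z : ℝ × ℝ, fderiv ℝ XQ z (1, 0) + fderiv ℝ XP z (0, 1) = 0) (x : ℝ × ℝ) :
    HasFDerivAt (fun y : ℝ × ℝ => ∫ l in (0:ℝ)..1, (y.2 * XQ (l • y) - y.1 * XP (l • y)))
      (XQ x • ContinuousLinearMap.snd ℝ ℝ ℝ - XP x • ContinuousLinearMap.fst ℝ ℝ ℝ) x := by
  have hDFcont := helmDF_cont XQ XP hXQ hXP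
  have hFcont : ∀ y : ℝ × ℝ, Continuous fun l : ℝ => y.2 * XQ (l • y) - y.1 * XP (l • y) := by
    intro y
    have h : Continuous fun l : ℝ => l • y := continuous_id.smul continuous_const
    exact (continuous_const.mul (hXQ.continuous.comp h)).sub
      (continuous_const.mul (hXP.continuous.comp h))
  obtain ⟨C, hC⟩ := ((isCompact_closedBall x 1).prod (isCompact_Icc (a := (0:ℝ)) (b := 1))).exists_bound_of_continuousOn hDFcont.continuousOn
  have key : HasFDerivAt (fun y : ℝ × ℝ => ∫ l in (0:ℝ)..1, (y.2 * XQ (l • y) - y.1 * XP (l • y)))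
      (∫ l in (0:ℝ)..1, helmDF XQ XP x l) x := by
    apply intervalIntegral.hasFDerivAt_integral_of_dominated_of_fderiv_le
      (F' := fun y l => helmDF XQ XP y l) (bound := fun _ => C) (s := ball x 1) (ball_mem_nhds x one_pos)
    · filter_upwards with y using ((hFcont y).aestronglyMeasurable)
    · exact (hFcont x).intervalIntegrable 0 1
    · exact (hDFcont.comp (continuous_const.prodMk continuous_id)).aestronglyMeasurable
    · filter_upwards with t ht y hy
      have ht' : t ∈ Icc (0:ℝ) 1 := by
        rw [Set.uIoc_of_le zero_le_one] at ht; exact ⟨le_of_lt ht.1, ht.2⟩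
      exact hC (y, t) ⟨ball_subset_closedBall hy, ht'⟩
    · exact intervalIntegrable_const
    · filter_upwards with t ht y hy using helm_integrand_fderiv XQ XP hXQ hXP t y
  have hint : (∫ l in (0:ℝ)..1, helmDF XQ XP x l)
      = XQ x • ContinuousLinearMap.snd ℝ ℝ ℝ - XP x • ContinuousLinearMap.fst ℝ ℝ ℝ := by
    have hcont : Continuous fun l => helmDF XQ XP x l :=
      hDFcont.comp (continuous_const.prodMk continuous_id)
    have hii : IntervalIntegrable (fun l => helmDF XQ XP x l) volume 0 1 :=
      hcont.intervalIntegrable 0 1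
    apply ContinuousLinearMap.ext
    intro w
    rw [ContinuousLinearMap.intervalIntegral_apply hii w]
    have hd : ∀ l : ℝ, HasDerivAt (fun l : ℝ => l * (w.2 * XQ (l • x) - w.1 * XP (l • x)))
        (helmDF XQ XP x l w) l := by
      intro l
      have hx : HasDerivAt (fun l : ℝ => l • x) x l := by
        simpa using (hasDerivAt_id l).smul_const x
      have hQ : HasDerivAt (fun l : ℝ => XQ (l • x)) (fderiv ℝ XQ (l • x) x) l :=
        ((hXQ.differentiable one_ne_zero (l • x)).hasFDerivAt).comp_hasDerivAt l hx
      have hP : HasDerivAt (fun l : ℝ => XP (l • x)) (fderiv ℝ XP (l • x) x) l :=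
        ((hXP.differentiable one_ne_zero (l • x)).hasFDerivAt).comp_hasDerivAt l hx
      have h2 := (hasDerivAt_id l).fun_mul ((hQ.const_mul w.2).fun_sub (hP.const_mul w.1))
      refine h2.congr_deriv (Eq.symm ?_)
      simp only [helmDF, ContinuousLinearMap.sub_apply, ContinuousLinearMap.add_apply,
        ContinuousLinearMap.smul_apply, ContinuousLinearMap.comp_apply,
        ContinuousLinearMap.smul_apply, ContinuousLinearMap.id_apply,
        ContinuousLinearMap.coe_snd', ContinuousLinearMap.coe_fst', smul_eq_mul, id_eq]
      rw [clm_eval (fderiv ℝ XQ (l • x)) (l • w), clm_eval (fderiv ℝ XP (l • x)) (l • w),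
        clm_eval (fderiv ℝ XQ (l • x)) x, clm_eval (fderiv ℝ XP (l • x)) x]
      simp only [Prod.smul_fst, Prod.smul_snd, smul_eq_mul]
      linear_combination (l * (x.2 * w.1 - x.1 * w.2)) * hdiv' (l • x)
    have hcont2 : Continuous fun l => helmDF XQ XP x l w :=
      (hcont.clm_apply continuous_const)
    rw [intervalIntegral.integral_eq_sub_of_hasDerivAt (fun l _ => hd l)
      (hcont2.intervalIntegrable 0 1)]
    simp [one_smul]
    ring
  rwa [hint] at key

lemma sum_by_parts (P U : ℕ → ℝ) (N : ℕ) (hU0 : U 0 = 0) (hUN : U N = 0) :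
    ∑ k ∈ Finset.range N, P k * (U (k + 1) - U k)
      = ∑ k ∈ Finset.range N, (P (k - 1) - P k) * U k := by
  have h1 : ∑ k ∈ Finset.range N, P k * U (k + 1)
      = ∑ k ∈ Finset.range N, P (k - 1) * U k := by
    have h := Finset.sum_range_succ' (fun j => P (j - 1) * U j) N
    rw [Finset.sum_range_succ (fun j => P (j - 1) * U j) N] at h
    simp only [Nat.add_sub_cancel, hU0, hUN, mul_zero, add_zero, Nat.zero_sub] at h
    exact h.symm
  simp_rw [mul_sub]
  rw [Finset.sum_sub_distrib, h1, ← Finset.sum_sub_distrib]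
  exact Finset.sum_congr rfl fun k _ => by ring

/-- Discrete Hamiltonian Helmholtz theorem (scalar sufficiency): if the
vector field `(X_Q, X_P)` is divergence free, then the homotopy formula
`H(q,p) = ∫_0^1 (p·X_Q(λq,λp) - q·X_P(λq,λp)) dλ` satisfies
`∂H/∂p = X_Q`, `∂H/∂q = -X_P`, and a discrete curve `(Q,P)` solves the
discrete system `ΔQ = X_Q(Q,P)`, `∇P = X_P(Q,P)` on interior points iff it
is a critical point of the discrete action for variations vanishing at the
endpoints. -/
theorem discrete_helmholtz_scalar_sufficiency (N : ℕ) (hN : 2 ≤ N)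
    (XQ XP : ℝ × ℝ → ℝ) (hXQ : ContDiff ℝ 1 XQ) (hXP : ContDiff ℝ 1 XP)
    (hdiv : ∀ q p : ℝ,
      deriv (fun q' => XQ (q', p)) q + deriv (fun p' => XP (q, p')) p = 0)
    (H : ℝ → ℝ → ℝ)
    (hH : ∀ q p : ℝ, H q p =
      ∫ l in (0:ℝ)..1, (p * XQ (l * q, l * p) - q * XP (l * q, l * p))) :
    (∀ q p : ℝ,
        deriv (fun p' => H q p') p = XQ (q, p) ∧
        deriv (fun q' => H q' p) q = - XP (q, p)) ∧
    (∀ Q P : ℕ → ℝ,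
      (∀ k, 1 ≤ k → k ≤ N - 1 →
          Q (k + 1) - Q k = XQ (Q k, P k) ∧ P k - P (k - 1) = XP (Q k, P k))
      ↔ (∀ U V : ℕ → ℝ, U 0 = 0 → U N = 0 → V 0 = 0 → V N = 0 →
          deriv (fun ε : ℝ => ∑ k ∈ Finset.range N,
            ((P k + ε * V k) * ((Q (k + 1) + ε * U (k + 1)) - (Q k + ε * U k))
              - H (Q k + ε * U k) (P k + ε * V k))) 0 = 0)) := by
  have hdiv' : ∀ z : ℝ × ℝ, fderiv ℝ XQ z (1, 0) + fderiv ℝ XP z (0, 1) = 0 := by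
    rintro ⟨q, p⟩
    have h1 : HasDerivAt (fun q' => XQ (q', p)) (fderiv ℝ XQ (q, p) ((1:ℝ), (0:ℝ))) q :=
      ((hXQ.differentiable one_ne_zero (q, p)).hasFDerivAt).comp_hasDerivAt q
        ((hasDerivAt_id q).prodMk (hasDerivAt_const q p))
    have h2 : HasDerivAt (fun p' => XP (q, p')) (fderiv ℝ XP (q, p) ((0:ℝ), (1:ℝ))) p :=
      ((hXP.differentiable one_ne_zero (q, p)).hasFDerivAt).comp_hasDerivAt p
        ((hasDerivAt_const p q).prodMk (hasDerivAt_id p))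
    rw [← h1.deriv, ← h2.deriv]
    exact hdiv q p
  have hHfun : (fun y : ℝ × ℝ => H y.1 y.2)
      = fun y : ℝ × ℝ => ∫ l in (0:ℝ)..1, (y.2 * XQ (l • y) - y.1 * XP (l • y)) := by
    funext y; exact hH y.1 y.2
  have hHf : ∀ z : ℝ × ℝ, HasFDerivAt (fun y : ℝ × ℝ => H y.1 y.2)
      (XQ z • ContinuousLinearMap.snd ℝ ℝ ℝ - XP z • ContinuousLinearMap.fst ℝ ℝ ℝ) z := by
    intro z; rw [hHfun]; exact helm_main XQ XP hXQ hXP hdiv' z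
  constructor
  · intro q p
    refine ⟨?_, ?_⟩
    · have h := (hHf (q, p)).comp_hasDerivAt p ((hasDerivAt_const p q).prodMk (hasDerivAt_id p))
      simpa [Function.comp_def] using h.deriv
    · have h := (hHf (q, p)).comp_hasDerivAt q ((hasDerivAt_id q).prodMk (hasDerivAt_const q p))
      simpa [Function.comp_def] using h.deriv
  · intro Q P
    have key : ∀ U V : ℕ → ℝ, U 0 = 0 → U N = 0 →
        deriv (fun ε : ℝ => ∑ k ∈ Finset.range N,
          ((P k + ε * V k) * ((Q (k + 1) + ε * U (k + 1)) - (Q k + ε * U k))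
            - H (Q k + ε * U k) (P k + ε * V k))) 0
        = ∑ k ∈ Finset.range N,
            (V k * (Q (k + 1) - Q k - XQ (Q k, P k))
              - U k * (P k - P (k - 1) - XP (Q k, P k))) := by
      intro U V hU0 hUN
      have hterm : ∀ k : ℕ, HasDerivAt (fun ε : ℝ =>
          (P k + ε * V k) * ((Q (k + 1) + ε * U (k + 1)) - (Q k + ε * U k))
            - H (Q k + ε * U k) (P k + ε * V k))
          (V k * (Q (k + 1) - Q k) + P k * (U (k + 1) - U k)
            - (XQ (Q k, P k) * V k - XP (Q k, P k) * U k)) 0 := by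
        intro k
        have h1 : HasDerivAt (fun ε : ℝ => P k + ε * V k) (V k) 0 := by
          simpa using ((hasDerivAt_id (0:ℝ)).mul_const (V k)).const_add (P k)
        have h2 : HasDerivAt (fun ε : ℝ => Q (k+1) + ε * U (k+1)) (U (k+1)) 0 := by
          simpa using ((hasDerivAt_id (0:ℝ)).mul_const (U (k+1))).const_add (Q (k+1))
        have h3 : HasDerivAt (fun ε : ℝ => Q k + ε * U k) (U k) 0 := by
          simpa using ((hasDerivAt_id (0:ℝ)).mul_const (U k)).const_add (Q k)
        have h4 := h1.fun_mul (h2.fun_sub h3)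
        have hin : HasDerivAt (fun ε : ℝ => ((Q k + ε * U k, P k + ε * V k) : ℝ × ℝ))
            (U k, V k) 0 := h3.prodMk h1
        have h5 := (hHf (Q k + 0 * U k, P k + 0 * V k)).comp_hasDerivAt 0 hin
        have h5' : HasDerivAt (fun ε : ℝ => H (Q k + ε * U k) (P k + ε * V k))
            (XQ (Q k, P k) * V k - XP (Q k, P k) * U k) 0 := by
          simpa [Function.comp_def] using h5
        have h6 := h4.fun_sub h5'
        refine h6.congr_deriv (Eq.symm ?_)
        simp
      have hsum := HasDerivAt.fun_sum (u := Finset.range N) (x := (0:ℝ)) fun k _ => hterm k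
      rw [hsum.deriv]
      have habel := sum_by_parts P U N hU0 hUN
      calc (∑ k ∈ Finset.range N, (V k * (Q (k + 1) - Q k) + P k * (U (k + 1) - U k)
              - (XQ (Q k, P k) * V k - XP (Q k, P k) * U k)))
          = (∑ k ∈ Finset.range N, P k * (U (k + 1) - U k))
            + ∑ k ∈ Finset.range N,
              (V k * (Q (k + 1) - Q k - XQ (Q k, P k)) + XP (Q k, P k) * U k) := by
            rw [← Finset.sum_add_distrib]; exact Finset.sum_congr rfl fun k _ => by ring
        _ = (∑ k ∈ Finset.range N, (P (k - 1) - P k) * U k)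
            + ∑ k ∈ Finset.range N,
              (V k * (Q (k + 1) - Q k - XQ (Q k, P k)) + XP (Q k, P k) * U k) := by
            rw [habel]
        _ = ∑ k ∈ Finset.range N, (V k * (Q (k + 1) - Q k - XQ (Q k, P k))
              - U k * (P k - P (k - 1) - XP (Q k, P k))) := by
            rw [← Finset.sum_add_distrib]; exact Finset.sum_congr rfl fun k _ => by ring
    constructor
    · intro heq U V hU0 hUN hV0 hVN
      rw [key U V hU0 hUN]
      apply Finset.sum_eq_zero
      intro k hk
      rcases Nat.eq_zero_or_pos k with hk0 | hk1
      · subst hk0; simp [hU0, hV0]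
      · have hkN : k ≤ N - 1 := Nat.le_sub_one_of_lt (Finset.mem_range.mp hk)
        obtain ⟨e1, e2⟩ := heq k hk1 hkN
        rw [e1, e2]; ring
    · intro hcrit k hk1 hkN
      have hkN' : k < N := lt_of_le_of_lt hkN (Nat.sub_lt (by omega) one_pos)
      constructor
      · have h := hcrit (fun _ => 0) (fun j => if j = k then 1 else 0) rfl rfl
          (if_neg (by omega)) (if_neg (by omega))
        rw [key (fun _ => 0) (fun j => if j = k then 1 else 0) rfl rfl] at h
        simp only [zero_mul, sub_zero, ite_mul, one_mul] at h
        rw [Finset.sum_ite_eq' (Finset.range N) k] at h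
        simp only [Finset.mem_range, hkN', if_true] at h
        linarith
      · have h := hcrit (fun j => if j = k then 1 else 0) (fun _ => 0)
          (if_neg (by omega)) (if_neg (by omega)) rfl rfl
        rw [key (fun j => if j = k then 1 else 0) (fun _ => 0)
          (if_neg (by omega)) (if_neg (by omega))] at h
        simp only [zero_mul, zero_sub, ite_mul, one_mul] at h
        rw [Finset.sum_neg_distrib] at h
        rw [Finset.sum_ite_eq' (Finset.range N) k] at h
        simp only [Finset.mem_range, hkN', if_true] at h
        linarith
end
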